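/- Under the ROBE-Z setup, ROBE-Z has variance at most that of feature hashing: for all x, y ∈ ℝⁿ, V_Z(x,y,n,m) ≤ V_1(x,y,n,m), where V_Z is the variance of the ROBE-Z inner-product estimator with block size Z and V_1 is the variance of the estimator with block size 1 on the same vectors, dimension and memory size. -/

import Mathlib

open Finset

noncomputable section

/-- Sign value of a Boolean: `true ↦ +1`, `false ↦ -1`. -/
def sgn (b : Bool) : ℝ := if b then 1 else -1

/-- The block id of an index `i` is a valid index into `Fin (n / Z)`. -/
theorem blockLt {n Z : ℕ} (hdvd : Z ∣ n) (i : Fin n) : i.1 / Z < n / Z :=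
  Nat.div_lt_div_of_lt_of_dvd hdvd i.isLt

/-- ROBE-Z location map: `idx i = (h (⌊i/Z⌋) + (i mod Z)) mod m`. -/
def idx (n m Z : ℕ) (hdvd : Z ∣ n) (h : Fin (n / Z) → Fin m) (i : Fin n) : ℕ :=
  ((h ⟨i.1 / Z, blockLt hdvd i⟩).1 + i.1 % Z) % m

/-- The ROBE-Z inner-product estimator `Ŝ(x,y)`, as a function of the random
sample `ω = (h, g)` drawn from the (finite) product space. -/
def est (n m Z : ℕ) (hdvd : Z ∣ n) (x y : Fin n → ℝ)
    (ω : (Fin (n / Z) → Fin m) × (Fin n → Bool)) : ℝ :=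
  ∑ j : Fin m,
    (∑ i : Fin n, x i * sgn (ω.2 i) * (if idx n m Z hdvd ω.1 i = j.1 then 1 else 0)) *
    (∑ i : Fin n, y i * sgn (ω.2 i) * (if idx n m Z hdvd ω.1 i = j.1 then 1 else 0))

/-- Expectation with respect to the uniform (product) measure on the finite
sample space of pairs `(h, g)`. -/
def expec (n m Z : ℕ) (f : ((Fin (n / Z) → Fin m) × (Fin n → Bool)) → ℝ) : ℝ :=
  (∑ ω : (Fin (n / Z) → Fin m) × (Fin n → Bool), f ω) /
    (Fintype.card ((Fin (n / Z) → Fin m) × (Fin n → Bool)))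

/-- Variance `V_Z(x,y,n,m)` of the ROBE-Z inner-product estimator. -/
def varZ (n m Z : ℕ) (hdvd : Z ∣ n) (x y : Fin n → ℝ) : ℝ :=
  expec n m Z (fun ω => (est n m Z hdvd x y ω) ^ 2) -
    (expec n m Z (est n m Z hdvd x y)) ^ 2

/-- The feature-hashing (block size 1) inner-product estimator, with location
map `idx i = h i`. -/
def est1 (n m : ℕ) (x y : Fin n → ℝ)
    (ω : (Fin n → Fin m) × (Fin n → Bool)) : ℝ :=
  ∑ j : Fin m,
    (∑ i : Fin n, x i * sgn (ω.2 i) * (if ω.1 i = j then 1 else 0)) *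
    (∑ i : Fin n, y i * sgn (ω.2 i) * (if ω.1 i = j then 1 else 0))

/-- Expectation for the feature-hashing sample space. -/
def expec1 (n m : ℕ) (f : ((Fin n → Fin m) × (Fin n → Bool)) → ℝ) : ℝ :=
  (∑ ω : (Fin n → Fin m) × (Fin n → Bool), f ω) /
    (Fintype.card ((Fin n → Fin m) × (Fin n → Bool)))

/-- Variance `V_1(x,y,n,m)` of the feature-hashing estimator. -/
def var1 (n m : ℕ) (x y : Fin n → ℝ) : ℝ :=
  expec1 n m (fun ω => (est1 n m x y ω) ^ 2) - (expec1 n m (est1 n m x y)) ^ 2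

lemma sgn_mul_self (b : Bool) : sgn b * sgn b = 1 := by cases b <;> simp [sgn]

lemma sgn_not (b : Bool) : sgn (!b) = - sgn b := by cases b <;> simp [sgn]

lemma card_bool_fun (n : ℕ) :
    (Fintype.card (Fin n → Bool) : ℝ) = 2 ^ n := by
  rw [Fintype.card_fun]; simp

/-- Flip involution: if `F` does not depend on coordinate `i`, the signed sum vanishes. -/
lemma flip_sum {n : ℕ} (i : Fin n) (F : (Fin n → Bool) → ℝ)
    (hF : ∀ g b, F (Function.update g i b) = F g) :
    ∑ g : Fin n → Bool, sgn (g i) * F g = 0 := by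
  have hinv : Function.Involutive (fun g : Fin n → Bool => Function.update g i (! g i)) := by
    intro g
    funext k
    by_cases hk : k = i
    · subst hk; simp
    · simp [Function.update_of_ne hk]
  set f : (Fin n → Bool) → ℝ := fun g => sgn (g i) * F g with hf
  have h1 : ∑ g, f (hinv.toPerm _ g) = ∑ g, f g := Equiv.sum_comp _ f
  have h2 : ∀ g, f (hinv.toPerm _ g) = - f g := by
    intro g
    have : hinv.toPerm _ g = Function.update g i (! g i) := rfl
    rw [this, hf]
    simp only [Function.update_self, hF, sgn_not]
    ring
  have h3 : ∑ g, f (hinv.toPerm _ g) = - ∑ g, f g := by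
    rw [Finset.sum_congr rfl fun g _ => h2 g, Finset.sum_neg_distrib]
  have h4 : ∑ g, f g = 0 := by
    have := h1.symm.trans h3
    linarith
  exact h4

lemma sum_sgn_two {n : ℕ} (i i' : Fin n) :
    ∑ g : Fin n → Bool, sgn (g i) * sgn (g i') = if i = i' then (2:ℝ)^n else 0 := by
  by_cases h : i = i'
  · subst h
    rw [if_pos rfl, Finset.sum_congr rfl fun g _ => sgn_mul_self (g i), Finset.sum_const]
    rw [Finset.card_univ, nsmul_eq_mul, mul_one, card_bool_fun]
  · rw [if_neg h]
    exact flip_sum i (fun g => sgn (g i'))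
      (fun g b => by simp [Function.update_of_ne (Ne.symm h)])

lemma sum_sgn_four {n : ℕ} (i i' j j' : Fin n) (hii : i ≠ i') (hjj : j ≠ j') :
    ∑ g : Fin n → Bool, (sgn (g i) * sgn (g i')) * (sgn (g j) * sgn (g j')) =
      (if i = j ∧ i' = j' then (2:ℝ)^n else 0) + (if i = j' ∧ i' = j then (2:ℝ)^n else 0) := by
  by_cases hij : i = j
  · subst hij
    have h2 : ∀ g : Fin n → Bool,
        (sgn (g i) * sgn (g i')) * (sgn (g i) * sgn (g j')) = sgn (g i') * sgn (g j') := by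
      intro g
      rw [show (sgn (g i) * sgn (g i')) * (sgn (g i) * sgn (g j'))
          = (sgn (g i) * sgn (g i)) * (sgn (g i') * sgn (g j')) from by ring,
        sgn_mul_self, one_mul]
    rw [Finset.sum_congr rfl fun g _ => h2 g, sum_sgn_two]
    have hne : ¬ (i = j' ∧ i' = i) := fun hc => hjj hc.1
    rw [if_neg hne, add_zero]
    by_cases h : i' = j'
    · rw [if_pos h, if_pos ⟨rfl, h⟩]
    · rw [if_neg h, if_neg (fun hc => h hc.2)]
  · by_cases hij' : i = j'
    · subst hij'
      have h2 : ∀ g : Fin n → Bool,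
          (sgn (g i) * sgn (g i')) * (sgn (g j) * sgn (g i)) = sgn (g i') * sgn (g j) := by
        intro g
        rw [show (sgn (g i) * sgn (g i')) * (sgn (g j) * sgn (g i))
            = (sgn (g i) * sgn (g i)) * (sgn (g i') * sgn (g j)) from by ring,
          sgn_mul_self, one_mul]
      rw [Finset.sum_congr rfl fun g _ => h2 g, sum_sgn_two]
      rw [if_neg (fun hc : i = j ∧ i' = i => hij hc.1), zero_add]
      by_cases h : i' = j
      · rw [if_pos h, if_pos ⟨rfl, h⟩]
      · rw [if_neg h, if_neg (fun hc => h hc.2)]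
    · have h2 : ∀ g : Fin n → Bool,
          (sgn (g i) * sgn (g i')) * (sgn (g j) * sgn (g j'))
            = sgn (g i) * (sgn (g i') * (sgn (g j) * sgn (g j'))) := by
        intro g; ring
      rw [Finset.sum_congr rfl fun g _ => h2 g,
        flip_sum i (fun g => sgn (g i') * (sgn (g j) * sgn (g j'))) (fun g b => by
          show sgn (Function.update g i b i') * (sgn (Function.update g i b j) * sgn (Function.update g i b j')) = sgn (g i') * (sgn (g j) * sgn (g j'))
          rw [Function.update_of_ne (Ne.symm hii), Function.update_of_ne (fun hc => hij hc.symm),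
            Function.update_of_ne (fun hc => hij' hc.symm)]),
        if_neg (fun hc : i = j ∧ i' = j' => hij hc.1),
        if_neg (fun hc : i = j' ∧ i' = j => hij' hc.1), add_zero]
lemma sum_ite_pair {m : ℕ} {a a' : ℕ} (ha : a < m) :
    ∑ j : Fin m, (if a = j.1 then (1:ℝ) else 0) * (if a' = j.1 then 1 else 0) =
      if a = a' then 1 else 0 := by
  by_cases h : a = a'
  · subst h
    rw [if_pos rfl]
    have hj : ∀ j : Fin m, (if a = j.1 then (1:ℝ) else 0) * (if a = j.1 then 1 else 0)
        = if j = ⟨a, ha⟩ then 1 else 0 := by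
      intro j
      by_cases hja : a = j.1
      · rw [if_pos hja, if_pos (Fin.ext hja.symm : j = ⟨a, ha⟩), one_mul]
      · rw [if_neg hja, if_neg (fun hc : j = ⟨a, ha⟩ => hja (by rw [hc])), zero_mul]
    rw [Finset.sum_congr rfl fun j _ => hj j]
    simp
  · rw [if_neg h]
    refine Finset.sum_eq_zero fun j _ => ?_
    by_cases hja : a = j.1
    · rw [if_neg (fun hc : a' = j.1 => h (hja.trans hc.symm)), mul_zero]
    · rw [if_neg hja, zero_mul]

lemma expand {n m : ℕ} (x y : Fin n → ℝ) (loc : Fin n → ℕ) (hloc : ∀ i, loc i < m)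
    (g : Fin n → Bool) :
    (∑ j : Fin m,
      (∑ i, x i * sgn (g i) * (if loc i = j.1 then 1 else 0)) *
      (∑ i, y i * sgn (g i) * (if loc i = j.1 then 1 else 0))) =
    ∑ i, ∑ i', (x i * y i') * (sgn (g i) * sgn (g i')) *
      (if loc i = loc i' then 1 else 0) := by
  have step : ∀ j : Fin m,
      (∑ i, x i * sgn (g i) * (if loc i = j.1 then (1:ℝ) else 0)) *
      (∑ i, y i * sgn (g i) * (if loc i = j.1 then 1 else 0)) =
      ∑ i, ∑ i', (x i * y i') * (sgn (g i) * sgn (g i')) *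
        ((if loc i = j.1 then 1 else 0) * (if loc i' = j.1 then 1 else 0)) := by
    intro j
    rw [Finset.sum_mul_sum]
    exact Finset.sum_congr rfl fun i _ => Finset.sum_congr rfl fun i' _ => by ring
  rw [Finset.sum_congr rfl fun j _ => step j, Finset.sum_comm]
  refine Finset.sum_congr rfl fun i _ => ?_
  rw [Finset.sum_comm]
  refine Finset.sum_congr rfl fun i' _ => ?_
  rw [← Finset.mul_sum, sum_ite_pair (hloc i)]

/-- `c`-weight of a pair. -/
def cPair {n : ℕ} (x y : Fin n → ℝ) (p : Fin n × Fin n) : ℝ :=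
  x p.1 ^ 2 * y p.2 ^ 2 + (x p.1 * y p.1) * (x p.2 * y p.2)

lemma g_lin {n : ℕ} (x y : Fin n → ℝ) (loc : Fin n → ℕ) :
    ∑ g : Fin n → Bool, (∑ i, ∑ i', (x i * y i') * (sgn (g i) * sgn (g i')) *
        (if loc i = loc i' then (1:ℝ) else 0))
      = 2^n * ∑ i, x i * y i := by
  rw [Finset.sum_comm]
  have hi : ∀ i : Fin n,
      (∑ g : Fin n → Bool, ∑ i', (x i * y i') * (sgn (g i) * sgn (g i')) *
        (if loc i = loc i' then (1:ℝ) else 0)) = 2^n * (x i * y i) := by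
    intro i
    rw [Finset.sum_comm]
    have hi' : ∀ i' : Fin n,
        (∑ g : Fin n → Bool, (x i * y i') * (sgn (g i) * sgn (g i')) *
          (if loc i = loc i' then (1:ℝ) else 0))
        = ((x i * y i') * (if loc i = loc i' then 1 else 0)) *
            (if i = i' then (2:ℝ)^n else 0) := by
      intro i'
      rw [show (∑ g : Fin n → Bool, (x i * y i') * (sgn (g i) * sgn (g i')) *
          (if loc i = loc i' then (1:ℝ) else 0))
          = ((x i * y i') * (if loc i = loc i' then 1 else 0)) *
            ∑ g : Fin n → Bool, sgn (g i) * sgn (g i') from by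
        rw [Finset.mul_sum]; exact Finset.sum_congr rfl fun g _ => by ring]
      rw [sum_sgn_two]
    rw [Finset.sum_congr rfl fun i' _ => hi' i']
    rw [Finset.sum_eq_single i]
    · rw [if_pos rfl, if_pos rfl, mul_one]; ring
    · intro i' _ hne
      rw [if_neg (fun hc : i = i' => hne hc.symm), mul_zero]
    · intro hc; exact absurd (Finset.mem_univ i) hc
  rw [Finset.sum_congr rfl fun i _ => hi i, ← Finset.mul_sum]
lemma g_sq {n : ℕ} (x y : Fin n → ℝ) (loc : Fin n → ℕ) :
    ∑ g : Fin n → Bool, (∑ i, ∑ i', (x i * y i') * (sgn (g i) * sgn (g i')) *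
        (if loc i = loc i' then (1:ℝ) else 0)) ^ 2
      = 2^n * ((∑ i, x i * y i)^2
          + ∑ p : Fin n × Fin n, if p.1 ≠ p.2 then
              cPair x y p * (if loc p.1 = loc p.2 then 1 else 0) else 0) := by
  set e : Fin n × Fin n → ℝ := fun p =>
    if p.1 = p.2 then 0 else (x p.1 * y p.2) * (if loc p.1 = loc p.2 then 1 else 0) with he
  set A : ℝ := ∑ i, x i * y i with hA
  -- Step 1: rewrite inner double sum
  have step1 : ∀ g : Fin n → Bool,
      (∑ i, ∑ i', (x i * y i') * (sgn (g i) * sgn (g i')) *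
        (if loc i = loc i' then (1:ℝ) else 0))
      = A + ∑ p : Fin n × Fin n, e p * (sgn (g p.1) * sgn (g p.2)) := by
    intro g
    rw [Fintype.sum_prod_type]
    have hrow : ∀ i : Fin n,
        (∑ i', (x i * y i') * (sgn (g i) * sgn (g i')) * (if loc i = loc i' then (1:ℝ) else 0))
        = x i * y i + ∑ i', e (i, i') * (sgn (g i) * sgn (g i')) := by
      intro i
      have hterm : ∀ i' : Fin n,
          (x i * y i') * (sgn (g i) * sgn (g i')) * (if loc i = loc i' then (1:ℝ) else 0)
          = (if i' = i then x i * y i else 0) + e (i, i') * (sgn (g i) * sgn (g i')) := by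
        intro i'
        by_cases hd : i = i'
        · subst hd
          have he0 : e (i, i) = 0 := by simp [he]
          rw [if_pos rfl, if_pos rfl, he0, sgn_mul_self]
          ring
        · have hee : e (i, i') = (x i * y i') * (if loc i = loc i' then 1 else 0) := by
            simp [he, hd]
          rw [if_neg (fun hc : i' = i => hd hc.symm), hee]
          ring
      rw [Finset.sum_congr rfl fun i' _ => hterm i', Finset.sum_add_distrib,
        Finset.sum_ite_eq' univ i (fun _ => x i * y i), if_pos (Finset.mem_univ i)]
    rw [Finset.sum_congr rfl fun i _ => hrow i, Finset.sum_add_distrib, ← hA]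
  rw [Finset.sum_congr rfl fun g _ => by rw [step1 g]]
  -- Step 2: expand square
  set B : (Fin n → Bool) → ℝ := fun g => ∑ p : Fin n × Fin n, e p * (sgn (g p.1) * sgn (g p.2))
    with hB
  have sq : ∀ g, (A + B g)^2 = A^2 + (2*A) * B g + B g * B g := by intro g; ring
  rw [Finset.sum_congr rfl fun g _ => sq g, Finset.sum_add_distrib, Finset.sum_add_distrib]
  -- first: constant
  have h1 : ∑ _g : Fin n → Bool, A^2 = 2^n * A^2 := by
    rw [Finset.sum_const, Finset.card_univ, nsmul_eq_mul, card_bool_fun]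
  -- second: linear term vanishes
  have h2 : ∑ g : Fin n → Bool, (2*A) * B g = 0 := by
    rw [← Finset.mul_sum, hB]
    have : ∑ g : Fin n → Bool, ∑ p : Fin n × Fin n, e p * (sgn (g p.1) * sgn (g p.2)) = 0 := by
      rw [Finset.sum_comm]
      refine Finset.sum_eq_zero fun p _ => ?_
      rw [← Finset.mul_sum, sum_sgn_two]
      by_cases hd : p.1 = p.2
      · rw [he]; simp only [if_pos hd]; ring
      · rw [if_neg hd, mul_zero]
    rw [this, mul_zero]
  -- third: quadratic term
  have h3 : ∑ g : Fin n → Bool, B g * B g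
      = 2^n * ∑ p : Fin n × Fin n, if p.1 ≠ p.2 then
          cPair x y p * (if loc p.1 = loc p.2 then 1 else 0) else 0 := by
    have hBB : ∀ g, B g * B g = ∑ p : Fin n × Fin n, ∑ q : Fin n × Fin n,
        (e p * e q) * ((sgn (g p.1) * sgn (g p.2)) * (sgn (g q.1) * sgn (g q.2))) := by
      intro g
      rw [hB, Finset.sum_mul_sum]
      exact Finset.sum_congr rfl fun p _ => Finset.sum_congr rfl fun q _ => by ring
    rw [Finset.sum_congr rfl fun g _ => hBB g, Finset.sum_comm]
    have hrow : ∀ p : Fin n × Fin n,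
        (∑ g : Fin n → Bool, ∑ q : Fin n × Fin n,
          (e p * e q) * ((sgn (g p.1) * sgn (g p.2)) * (sgn (g q.1) * sgn (g q.2))))
        = 2^n * (if p.1 ≠ p.2 then cPair x y p * (if loc p.1 = loc p.2 then 1 else 0) else 0) := by
      intro p
      rw [Finset.sum_comm]
      by_cases hp : p.1 = p.2
      · rw [if_neg (fun hc => hc hp)]
        rw [Finset.sum_eq_zero, mul_zero]
        intro q _
        refine Finset.sum_eq_zero fun g _ => ?_
        rw [he]; simp only [if_pos hp]; ring
      · -- p offdiagonal
        have hq : ∀ q : Fin n × Fin n,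
            (∑ g : Fin n → Bool,
              (e p * e q) * ((sgn (g p.1) * sgn (g p.2)) * (sgn (g q.1) * sgn (g q.2))))
            = (e p * e q) * ((if q = p then (2:ℝ)^n else 0) + (if q = p.swap then (2:ℝ)^n else 0)) := by
          intro q
          by_cases hqd : q.1 = q.2
          · have heq : e q = 0 := by rw [he]; simp only [if_pos hqd]
            rw [Finset.sum_eq_zero, heq, mul_zero, zero_mul]
            intro g _; rw [heq, mul_zero, zero_mul]
          · rw [show (∑ g : Fin n → Bool,
                (e p * e q) * ((sgn (g p.1) * sgn (g p.2)) * (sgn (g q.1) * sgn (g q.2))))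
                = (e p * e q) * ∑ g : Fin n → Bool,
                  (sgn (g p.1) * sgn (g p.2)) * (sgn (g q.1) * sgn (g q.2)) from by
              rw [Finset.mul_sum]]
            rw [sum_sgn_four p.1 p.2 q.1 q.2 hp hqd]
            congr 2
            · by_cases h : q = p
              · rw [if_pos h, if_pos ⟨congrArg Prod.fst h.symm, congrArg Prod.snd h.symm⟩]
              · rw [if_neg h, if_neg (fun hc : p.1 = q.1 ∧ p.2 = q.2 =>
                  h (Prod.ext hc.1.symm hc.2.symm))]
            · by_cases h : q = p.swap
              · rw [if_pos h, if_pos ⟨(congrArg Prod.snd h).symm, (congrArg Prod.fst h).symm⟩]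
              · rw [if_neg h, if_neg (fun hc : p.1 = q.2 ∧ p.2 = q.1 =>
                  h (Prod.ext hc.2.symm hc.1.symm))]
        rw [Finset.sum_congr rfl fun q _ => hq q]
        have hsplit : ∀ q : Fin n × Fin n,
            (e p * e q) * ((if q = p then (2:ℝ)^n else 0) + (if q = p.swap then (2:ℝ)^n else 0))
            = (if q = p then e p * e q * 2^n else 0) + (if q = p.swap then e p * e q * 2^n else 0) := by
          intro q
          by_cases h1' : q = p <;> by_cases h2' : q = p.swap
          · rw [if_pos h1', if_pos h2', if_pos h1', if_pos h2']; ring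
          · rw [if_pos h1', if_neg h2', if_pos h1', if_neg h2']; ring
          · rw [if_neg h1', if_pos h2', if_neg h1', if_pos h2']; ring
          · rw [if_neg h1', if_neg h2', if_neg h1', if_neg h2']; ring
        rw [Finset.sum_congr rfl fun q _ => hsplit q, Finset.sum_add_distrib,
          Finset.sum_ite_eq' univ p (fun q => e p * e q * 2^n), if_pos (Finset.mem_univ p),
          Finset.sum_ite_eq' univ p.swap (fun q => e p * e q * 2^n), if_pos (Finset.mem_univ _)]
        rw [if_pos hp]
        -- now: e p * e p * 2^n + e p * e p.swap * 2^n = 2^n * (cPair x y p * d p)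
        rw [he]
        simp only [if_neg hp, Prod.fst_swap, Prod.snd_swap,
          if_neg (fun hc : p.2 = p.1 => hp hc.symm)]
        have hd : (if loc p.2 = loc p.1 then (1:ℝ) else 0) = (if loc p.1 = loc p.2 then 1 else 0) := by
          by_cases h : loc p.1 = loc p.2
          · rw [if_pos h, if_pos h.symm]
          · rw [if_neg h, if_neg (fun hc => h hc.symm)]
        rw [hd]
        by_cases h : loc p.1 = loc p.2
        · rw [if_pos h, cPair]; ring
        · rw [if_neg h, cPair]; ring
    rw [Finset.sum_congr rfl fun p _ => hrow p, ← Finset.mul_sum]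
  rw [h1, h2, h3]
  ring
lemma sum_unique_ite {m : ℕ} (P : Fin m → Prop) [DecidablePred P] (hP : ∃! u, P u) :
    ∑ u : Fin m, (if P u then (1:ℝ) else 0) = 1 := by
  obtain ⟨u₀, hu₀, huniq⟩ := hP
  have key : ∀ u : Fin m, (if P u then (1:ℝ) else 0) = if u = u₀ then 1 else 0 := by
    intro u
    by_cases h : P u
    · rw [if_pos h, if_pos (huniq u h)]
    · rw [if_neg h, if_neg (fun hc : u = u₀ => h (hc.symm ▸ hu₀))]
  rw [Finset.sum_congr rfl fun u _ => key u, Finset.sum_ite_eq' univ u₀ (fun _ => (1:ℝ)),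
    if_pos (Finset.mem_univ u₀)]

lemma card_ne_fun {N m : ℕ} (b : Fin N) :
    (Fintype.card ({ j : Fin N // j ≠ b } → Fin m) : ℝ) = (m:ℝ) ^ (N - 1) := by
  have hcard : Fintype.card { j : Fin N // j ≠ b } = N - 1 := by
    have : Fintype.card { j : Fin N // ¬ (j = b) } = N - 1 := by
      rw [Fintype.card_subtype_compl, Fintype.card_subtype_eq, Fintype.card_fin]
    exact this
  rw [Fintype.card_fun, hcard, Fintype.card_fin]
  push_cast
  ring

lemma hash_pair {N m : ℕ} (b b' : Fin N) (hbb : b ≠ b')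
    (P : Fin m → Fin m → Prop) [∀ u v, Decidable (P u v)]
    (hP : ∀ v, ∃! u, P u v) :
    ∑ h : Fin N → Fin m, (if P (h b) (h b') then (1:ℝ) else 0) = (m:ℝ) ^ (N - 1) := by
  classical
  rw [← Equiv.sum_comp (Equiv.funSplitAt b (Fin m)).symm
    (fun h : Fin N → Fin m => if P (h b) (h b') then (1:ℝ) else 0)]
  rw [Fintype.sum_prod_type]
  have happ : ∀ (u : Fin m) (w : { j : Fin N // j ≠ b } → Fin m),
      ((Equiv.funSplitAt b (Fin m)).symm (u, w)) b = u := by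
    intro u w
    rw [Equiv.funSplitAt_symm_apply, dif_pos rfl]
  have happ' : ∀ (u : Fin m) (w : { j : Fin N // j ≠ b } → Fin m),
      ((Equiv.funSplitAt b (Fin m)).symm (u, w)) b' = w ⟨b', Ne.symm hbb⟩ := by
    intro u w
    rw [Equiv.funSplitAt_symm_apply, dif_neg (Ne.symm hbb)]
  have hstep : ∀ u : Fin m, ∀ w : { j : Fin N // j ≠ b } → Fin m,
      (if P (((Equiv.funSplitAt b (Fin m)).symm (u, w)) b)
          (((Equiv.funSplitAt b (Fin m)).symm (u, w)) b') then (1:ℝ) else 0)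
      = if P u (w ⟨b', Ne.symm hbb⟩) then (1:ℝ) else 0 := by
    intro u w
    rw [happ, happ']
  rw [Finset.sum_congr rfl fun u _ => Finset.sum_congr rfl fun w _ => hstep u w,
    Finset.sum_comm]
  rw [Finset.sum_congr rfl fun w _ => sum_unique_ite (fun u => P u (w ⟨b', Ne.symm hbb⟩))
    (hP _), Finset.sum_const, Finset.card_univ, nsmul_eq_mul, mul_one, card_ne_fun]
lemma exists_unique_shift {m : ℕ} (hm : 0 < m) (r r' : ℕ) (hr : r ≤ m) (v : Fin m) :
    ∃! u : Fin m, (u.1 + r) % m = (v.1 + r') % m := by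
  have hex : ((v.1 + r' + (m - r)) % m + r) % m = (v.1 + r') % m := by
    rw [Nat.mod_add_mod, add_assoc, Nat.sub_add_cancel hr, Nat.add_mod_right]
  refine ⟨⟨(v.1 + r' + (m - r)) % m, Nat.mod_lt _ hm⟩, hex, ?_⟩
  intro u hu
  have hcan : u.1 % m = ((v.1 + r' + (m - r)) % m) % m :=
    Nat.ModEq.add_right_cancel' r (hu.trans hex.symm)
  exact Fin.ext (by
    rw [Nat.mod_eq_of_lt u.isLt, Nat.mod_eq_of_lt (Nat.mod_lt _ hm)] at hcan
    exact hcan)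

lemma W_modelZ {n m Z : ℕ} (hm : 0 < m) (hZ : 0 < Z) (hZm : Z ≤ m) (hdvd : Z ∣ n)
    (p : Fin n × Fin n) (hp : p.1 ≠ p.2) :
    (∑ h : Fin (n/Z) → Fin m,
      (if idx n m Z hdvd h p.1 = idx n m Z hdvd h p.2 then (1:ℝ) else 0))
    = if p.1.1 / Z = p.2.1 / Z then 0 else (m:ℝ) ^ (n/Z - 1) := by
  by_cases hb : p.1.1 / Z = p.2.1 / Z
  · rw [if_pos hb]
    refine Finset.sum_eq_zero fun h _ => ?_
    rw [if_neg]
    intro heq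
    simp only [idx] at heq
    have hbfin : (⟨p.1.1 / Z, blockLt hdvd p.1⟩ : Fin (n/Z)) = ⟨p.2.1 / Z, blockLt hdvd p.2⟩ :=
      Fin.ext hb
    rw [hbfin] at heq
    have hmodeq : p.1.1 % Z ≡ p.2.1 % Z [MOD m] :=
      Nat.ModEq.add_left_cancel' _ heq
    have hr1 : p.1.1 % Z < m := lt_of_lt_of_le (Nat.mod_lt _ hZ) hZm
    have hr2 : p.2.1 % Z < m := lt_of_lt_of_le (Nat.mod_lt _ hZ) hZm
    have hreq : p.1.1 % Z = p.2.1 % Z := by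
      have := hmodeq
      unfold Nat.ModEq at this
      rwa [Nat.mod_eq_of_lt hr1, Nat.mod_eq_of_lt hr2] at this
    apply hp
    apply Fin.ext
    calc p.1.1 = Z * (p.1.1 / Z) + p.1.1 % Z := (Nat.div_add_mod _ _).symm
    _ = Z * (p.2.1 / Z) + p.2.1 % Z := by rw [hb, hreq]
    _ = p.2.1 := Nat.div_add_mod _ _
  · rw [if_neg hb]
    have hbb : (⟨p.1.1 / Z, blockLt hdvd p.1⟩ : Fin (n/Z)) ≠ ⟨p.2.1 / Z, blockLt hdvd p.2⟩ :=
      fun hc => hb (congrArg Fin.val hc)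
    have hP : ∀ v : Fin m, ∃! u : Fin m, (u.1 + p.1.1 % Z) % m = (v.1 + p.2.1 % Z) % m :=
      exists_unique_shift hm _ _ (le_trans (le_of_lt (Nat.mod_lt _ hZ)) hZm)
    have := hash_pair (m := m) ⟨p.1.1 / Z, blockLt hdvd p.1⟩ ⟨p.2.1 / Z, blockLt hdvd p.2⟩ hbb
      (fun u v => (u.1 + p.1.1 % Z) % m = (v.1 + p.2.1 % Z) % m) hP
    rw [← this]
    exact Finset.sum_congr rfl fun h _ => by simp only [idx]; rfl

lemma W_model1 {n m : ℕ} (p : Fin n × Fin n) (hp : p.1 ≠ p.2) :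
    (∑ h : Fin n → Fin m, (if (h p.1).1 = (h p.2).1 then (1:ℝ) else 0)) = (m:ℝ) ^ (n - 1) := by
  exact hash_pair p.1 p.2 hp (fun u v => u.1 = v.1)
    (fun v => ⟨v, rfl, fun u h => Fin.ext h⟩)
lemma fin_eq_val_ite {m : ℕ} (a b : Fin m) :
    (if a = b then (1:ℝ) else 0) = if a.1 = b.1 then 1 else 0 := by
  by_cases hc : a = b
  · rw [if_pos hc, if_pos (congrArg Fin.val hc)]
  · rw [if_neg hc, if_neg (fun hc' => hc (Fin.ext hc'))]

lemma card_hash_prod (N n m : ℕ) :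
    ((Fintype.card ((Fin N → Fin m) × (Fin n → Bool))) : ℝ) = (m:ℝ)^N * 2^n := by
  simp only [Fintype.card_prod, Fintype.card_fun, Fintype.card_fin, Fintype.card_bool]
  push_cast
  ring

lemma card_fin_fun (N m : ℕ) :
    ((Fintype.card (Fin N → Fin m)) : ℝ) = (m:ℝ)^N := by
  simp only [Fintype.card_fun, Fintype.card_fin]
  push_cast
  ring

lemma varZ_eq {n m Z : ℕ} (hn : 0 < n) (hm : 0 < m) (hZ : 0 < Z) (hZm : Z ≤ m) (hZn : Z ≤ n)
    (hdvd : Z ∣ n) (x y : Fin n → ℝ) :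
    varZ n m Z hdvd x y =
      (∑ p : Fin n × Fin n,
        if p.1 ≠ p.2 ∧ ¬ (p.1.1 / Z = p.2.1 / Z) then cPair x y p else 0) / m := by
  set N := n / Z with hNdef
  have hN1 : 1 ≤ N := (Nat.one_le_div_iff hZ).mpr hZn
  have hloc : ∀ (h : Fin N → Fin m) (i : Fin n), idx n m Z hdvd h i < m :=
    fun h i => Nat.mod_lt _ hm
  set A : ℝ := ∑ i, x i * y i with hA
  set S : ℝ := ∑ p : Fin n × Fin n,
    if p.1 ≠ p.2 ∧ ¬ (p.1.1 / Z = p.2.1 / Z) then cPair x y p else 0 with hS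
  have hexp : ∀ (h : Fin N → Fin m) (g : Fin n → Bool),
      est n m Z hdvd x y (h, g) =
        ∑ i, ∑ i', (x i * y i') * (sgn (g i) * sgn (g i')) *
          (if idx n m Z hdvd h i = idx n m Z hdvd h i' then 1 else 0) :=
    fun h g => expand x y (idx n m Z hdvd h) (hloc h) g
  have hrow1 : ∀ h : Fin N → Fin m,
      (∑ g : Fin n → Bool, est n m Z hdvd x y (h, g)) = 2^n * A := by
    intro h
    rw [Finset.sum_congr rfl fun g _ => hexp h g, g_lin x y (idx n m Z hdvd h)]
  have hsum1 : (∑ ω : (Fin N → Fin m) × (Fin n → Bool), est n m Z hdvd x y ω)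
      = (m:ℝ)^N * (2^n * A) := by
    rw [Fintype.sum_prod_type, Finset.sum_congr rfl fun h _ => hrow1 h, Finset.sum_const,
      Finset.card_univ, nsmul_eq_mul, card_fin_fun]
  have hrow2 : ∀ h : Fin N → Fin m,
      (∑ g : Fin n → Bool, est n m Z hdvd x y (h, g) ^ 2)
      = 2^n * A^2 + 2^n * (∑ p : Fin n × Fin n, if p.1 ≠ p.2 then
          cPair x y p * (if idx n m Z hdvd h p.1 = idx n m Z hdvd h p.2 then 1 else 0) else 0) := by
    intro h
    rw [Finset.sum_congr rfl fun g _ => by rw [hexp h g], g_sq x y (idx n m Z hdvd h)]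
    ring
  have hptw : ∀ p : Fin n × Fin n,
      (∑ h : Fin N → Fin m, if p.1 ≠ p.2 then
        cPair x y p * (if idx n m Z hdvd h p.1 = idx n m Z hdvd h p.2 then 1 else 0) else 0)
      = (m:ℝ)^(N-1) *
        (if p.1 ≠ p.2 ∧ ¬ (p.1.1 / Z = p.2.1 / Z) then cPair x y p else 0) := by
    intro p
    by_cases hp : p.1 = p.2
    · rw [Finset.sum_eq_zero fun h _ => if_neg (fun hc => hc hp),
        if_neg (fun hc : p.1 ≠ p.2 ∧ _ => hc.1 hp), mul_zero]
    · rw [Finset.sum_congr rfl fun h _ => if_pos hp, ← Finset.mul_sum,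
        W_modelZ hm hZ hZm hdvd p hp]
      by_cases hb : p.1.1 / Z = p.2.1 / Z
      · rw [if_pos hb, if_neg (fun hc : p.1 ≠ p.2 ∧ ¬ (p.1.1 / Z = p.2.1 / Z) => hc.2 hb),
          mul_zero, mul_zero]
      · rw [if_neg hb, if_pos ⟨hp, hb⟩]
        ring
  have hsum2 : (∑ ω : (Fin N → Fin m) × (Fin n → Bool), est n m Z hdvd x y ω ^ 2)
      = 2^n * ((m:ℝ)^N * A^2 + (m:ℝ)^(N-1) * S) := by
    rw [Fintype.sum_prod_type, Finset.sum_congr rfl fun h _ => hrow2 h,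
      Finset.sum_add_distrib, Finset.sum_const, Finset.card_univ, nsmul_eq_mul, card_fin_fun,
      ← Finset.mul_sum, Finset.sum_comm, Finset.sum_congr rfl fun p _ => hptw p,
      ← Finset.mul_sum, ← hS]
    ring
  have hm0 : (m:ℝ) ≠ 0 := Nat.cast_ne_zero.mpr hm.ne'
  have hmN1 : (m:ℝ)^(N-1) ≠ 0 := pow_ne_zero _ hm0
  have h2n : (2:ℝ)^n ≠ 0 := pow_ne_zero _ two_ne_zero
  have hpow : (m:ℝ)^N = (m:ℝ)^(N-1) * m := by
    rw [← pow_succ]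
    congr 1
    omega
  simp only [varZ, expec]
  rw [hsum1, hsum2, card_hash_prod, hpow]
  field_simp
  ring

lemma var1_eq {n m : ℕ} (hn : 0 < n) (hm : 0 < m) (x y : Fin n → ℝ) :
    var1 n m x y =
      (∑ p : Fin n × Fin n, if p.1 ≠ p.2 then cPair x y p else 0) / m := by
  have hloc : ∀ (h : Fin n → Fin m) (i : Fin n), (h i).1 < m := fun h i => (h i).isLt
  set A : ℝ := ∑ i, x i * y i with hA
  set S : ℝ := ∑ p : Fin n × Fin n, if p.1 ≠ p.2 then cPair x y p else 0 with hS
  have hexp : ∀ (h : Fin n → Fin m) (g : Fin n → Bool),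
      est1 n m x y (h, g) =
        ∑ i, ∑ i', (x i * y i') * (sgn (g i) * sgn (g i')) *
          (if (h i).1 = (h i').1 then 1 else 0) := by
    intro h g
    have hmid : est1 n m x y (h, g) = ∑ j : Fin m,
        (∑ i, x i * sgn (g i) * (if (h i).1 = j.1 then 1 else 0)) *
        (∑ i, y i * sgn (g i) * (if (h i).1 = j.1 then 1 else 0)) := by
      simp only [est1, fin_eq_val_ite]
    rw [hmid, expand x y (fun i => (h i).1) (hloc h) g]
  have hrow1 : ∀ h : Fin n → Fin m,
      (∑ g : Fin n → Bool, est1 n m x y (h, g)) = 2^n * A := by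
    intro h
    rw [Finset.sum_congr rfl fun g _ => hexp h g, g_lin x y (fun i => (h i).1)]
  have hsum1 : (∑ ω : (Fin n → Fin m) × (Fin n → Bool), est1 n m x y ω)
      = (m:ℝ)^n * (2^n * A) := by
    rw [Fintype.sum_prod_type, Finset.sum_congr rfl fun h _ => hrow1 h, Finset.sum_const,
      Finset.card_univ, nsmul_eq_mul, card_fin_fun]
  have hrow2 : ∀ h : Fin n → Fin m,
      (∑ g : Fin n → Bool, est1 n m x y (h, g) ^ 2)
      = 2^n * A^2 + 2^n * (∑ p : Fin n × Fin n, if p.1 ≠ p.2 then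
          cPair x y p * (if (h p.1).1 = (h p.2).1 then 1 else 0) else 0) := by
    intro h
    rw [Finset.sum_congr rfl fun g _ => by rw [hexp h g], g_sq x y (fun i => (h i).1)]
    ring
  have hptw : ∀ p : Fin n × Fin n,
      (∑ h : Fin n → Fin m, if p.1 ≠ p.2 then
        cPair x y p * (if (h p.1).1 = (h p.2).1 then 1 else 0) else 0)
      = (m:ℝ)^(n-1) * (if p.1 ≠ p.2 then cPair x y p else 0) := by
    intro p
    by_cases hp : p.1 = p.2
    · rw [Finset.sum_eq_zero fun h _ => if_neg (fun hc => hc hp),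
        if_neg (fun hc : p.1 ≠ p.2 => hc hp), mul_zero]
    · rw [Finset.sum_congr rfl fun h _ => if_pos hp, ← Finset.mul_sum,
        W_model1 p hp, if_pos hp]
      ring
  have hsum2 : (∑ ω : (Fin n → Fin m) × (Fin n → Bool), est1 n m x y ω ^ 2)
      = 2^n * ((m:ℝ)^n * A^2 + (m:ℝ)^(n-1) * S) := by
    rw [Fintype.sum_prod_type, Finset.sum_congr rfl fun h _ => hrow2 h,
      Finset.sum_add_distrib, Finset.sum_const, Finset.card_univ, nsmul_eq_mul, card_fin_fun,
      ← Finset.mul_sum, Finset.sum_comm, Finset.sum_congr rfl fun p _ => hptw p,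
      ← Finset.mul_sum, ← hS]
    ring
  have hm0 : (m:ℝ) ≠ 0 := Nat.cast_ne_zero.mpr hm.ne'
  have hmN1 : (m:ℝ)^(n-1) ≠ 0 := pow_ne_zero _ hm0
  have h2n : (2:ℝ)^n ≠ 0 := pow_ne_zero _ two_ne_zero
  have hpow : (m:ℝ)^n = (m:ℝ)^(n-1) * m := by
    rw [← pow_succ]
    congr 1
    omega
  simp only [var1, expec1]
  rw [hsum1, hsum2, card_hash_prod, hpow]
  field_simp
  ring
lemma same_block_sum_nonneg {n Z : ℕ} (x y : Fin n → ℝ) :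
    0 ≤ ∑ p : Fin n × Fin n,
      if p.1 ≠ p.2 ∧ p.1.1 / Z = p.2.1 / Z then cPair x y p else 0 := by
  set f : Fin n × Fin n → ℝ := fun p =>
    if p.1 ≠ p.2 ∧ p.1.1 / Z = p.2.1 / Z then cPair x y p else 0 with hf
  have hswap : (∑ p : Fin n × Fin n, f p) = ∑ p : Fin n × Fin n, f p.swap := by
    exact (Fintype.sum_equiv (Equiv.prodComm (Fin n) (Fin n)) (fun p => f p.swap) f
      (fun p => rfl)).symm
  have hpair : ∀ p : Fin n × Fin n, f p + f p.swap =
      if p.1 ≠ p.2 ∧ p.1.1 / Z = p.2.1 / Z then (x p.1 * y p.2 + x p.2 * y p.1)^2 else 0 := by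
    intro p
    by_cases hc : p.1 ≠ p.2 ∧ p.1.1 / Z = p.2.1 / Z
    · have hc' : p.swap.1 ≠ p.swap.2 ∧ p.swap.1.1 / Z = p.swap.2.1 / Z :=
        ⟨fun hh => hc.1 hh.symm, hc.2.symm⟩
      rw [hf]
      simp only [if_pos hc, if_pos hc']
      simp only [Prod.fst_swap, Prod.snd_swap, cPair]
      ring
    · have hc' : ¬ (p.swap.1 ≠ p.swap.2 ∧ p.swap.1.1 / Z = p.swap.2.1 / Z) := by
        intro hh
        exact hc ⟨fun h2 => hh.1 h2.symm, hh.2.symm⟩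
      rw [hf]
      simp only [if_neg hc, if_neg hc']
      simp only [if_neg hc, add_zero]
  have h2 : 2 * (∑ p : Fin n × Fin n, f p) = ∑ p : Fin n × Fin n, (f p + f p.swap) := by
    rw [Finset.sum_add_distrib, ← hswap]
    ring
  have h3 : 0 ≤ ∑ p : Fin n × Fin n, (f p + f p.swap) := by
    refine Finset.sum_nonneg fun p _ => ?_
    rw [hpair p]
    by_cases hc : p.1 ≠ p.2 ∧ p.1.1 / Z = p.2.1 / Z
    · rw [if_pos hc]; positivity
    · rw [if_neg hc]
  linarith

/-- ROBE-Z has variance at most that of feature hashing: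
`V_Z(x,y,n,m) ≤ V_1(x,y,n,m)`. -/
theorem robe_variance_le_feature_hashing (n m Z : ℕ) (hn : 0 < n) (hm : 0 < m)
    (hZ : 0 < Z) (hdvd : Z ∣ n) (hZm : Z ≤ m) (hmn : m ≤ n) (x y : Fin n → ℝ) :
    varZ n m Z hdvd x y ≤ var1 n m x y := by

  have hZn : Z ≤ n := le_trans hZm hmn
  rw [varZ_eq hn hm hZ hZm hZn hdvd x y, var1_eq hn hm x y]
  have hmpos : (0:ℝ) < m := by exact_mod_cast hm
  rw [div_le_div_iff_of_pos_right hmpos]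
  have hsplit : ∀ p : Fin n × Fin n,
      (if p.1 ≠ p.2 then cPair x y p else 0)
      = (if p.1 ≠ p.2 ∧ ¬ (p.1.1 / Z = p.2.1 / Z) then cPair x y p else 0)
        + (if p.1 ≠ p.2 ∧ p.1.1 / Z = p.2.1 / Z then cPair x y p else 0) := by
    intro p
    by_cases hne : p.1 ≠ p.2
    · by_cases hb : p.1.1 / Z = p.2.1 / Z
      · rw [if_pos hne, if_neg (fun hc => hc.2 hb), if_pos ⟨hne, hb⟩, zero_add]
      · rw [if_pos hne, if_pos ⟨hne, hb⟩, if_neg (fun hc => hb hc.2), add_zero]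
    · rw [if_neg hne, if_neg (fun hc => hne hc.1), if_neg (fun hc => hne hc.1), add_zero]
  rw [Finset.sum_congr rfl fun p _ => hsplit p, Finset.sum_add_distrib]
  have := same_block_sum_nonneg (Z := Z) x y
  linarith
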